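/- If x ∈ C¹([a,b],ℝ) and α : [a,b] → (0,1), then the type III left Caputo derivative of x vanishes at t = a, i.e., lim_{t→a⁺} (1/Γ(1-α(t))) ∫_a^t (t-τ)^{-α(t)} x'(τ) dτ = 0. -/

import Mathlib

open Real intervalIntegral Set Filter Topology

/-- The type III left Caputo derivative of variable order vanishes at the initial point:
its limit as t → a⁺ is 0. -/
theorem caputo_typeIII_tendsto_zero_at_initial_point
    (a b : ℝ) (hab : a < b) (x α : ℝ → ℝ)
    (hx : ContDiffOn ℝ 1 x (Set.Icc a b))
    (hα : ContinuousOn α (Set.Icc a b))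
    (hα01 : ∀ s ∈ Set.Icc a b, α s ∈ Set.Ioo (0 : ℝ) 1) :
    Filter.Tendsto
      (fun t => (1 / Real.Gamma (1 - α t)) *
        ∫ τ in a..t, (t - τ) ^ (-(α t)) * deriv x τ)
      (nhdsWithin a (Set.Ioi a)) (nhds 0) := by
  have ha : a ∈ Set.Icc a b := ⟨le_rfl, hab.le⟩
  obtain ⟨hαa0, hαa1⟩ := hα01 a ha
  -- α tends to α a along 𝓝[>] a
  have hle : 𝓝[>] a ≤ 𝓝[Set.Icc a b] a := by
    rw [← nhdsWithin_Ioc_eq_nhdsGT hab]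
    exact nhdsWithin_mono a Set.Ioc_subset_Icc_self
  have hαt : Tendsto α (𝓝[>] a) (𝓝 (α a)) := (hα a ha).mono_left hle
  -- limit of the Gamma coefficient
  have hΓcont : ContinuousAt (fun s => 1 / Real.Gamma (1 - s)) (α a) := by
    have h1 : ContinuousAt Real.Gamma (1 - α a) := by
      refine (Real.differentiableAt_Gamma fun m => ?_).continuousAt
      have hm : (0:ℝ) ≤ m := Nat.cast_nonneg m
      intro h
      linarith
    have h2 : Real.Gamma (1 - α a) ≠ 0 := (Real.Gamma_pos_of_pos (by linarith)).ne'
    exact (continuousAt_const.div (h1.comp (continuousAt_const.sub continuousAt_id)) h2)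
  have hcoef : Tendsto (fun t => 1 / Real.Gamma (1 - α t)) (𝓝[>] a)
      (𝓝 (1 / Real.Gamma (1 - α a))) := hΓcont.tendsto.comp hαt
  -- bound on the derivative
  obtain ⟨M, hM⟩ := isCompact_Icc.exists_bound_of_continuousOn
    (hx.continuousOn_derivWithin (uniqueDiffOn_Icc hab) le_rfl)
  set M' : ℝ := max M 0 with hM'def
  have hM'0 : 0 ≤ M' := le_max_right _ _
  have hMderiv : ∀ τ ∈ Set.Ioo a b, |deriv x τ| ≤ M' := by
    intro τ hτ
    have : deriv x τ = derivWithin x (Set.Icc a b) τ := by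
      rw [derivWithin_of_mem_nhds (Icc_mem_nhds hτ.1 hτ.2)]
    rw [this]
    exact le_trans (hM τ (Set.Ioo_subset_Icc_self hτ)) (le_max_left _ _)
  -- choose c with α a < c < 1
  set c : ℝ := (α a + 1) / 2 with hc
  have hac : α a < c := by rw [hc]; linarith
  have hc1 : c < 1 := by rw [hc]; linarith
  -- integral part tends to 0
  have hint : Tendsto (fun t => ∫ τ in a..t, (t - τ) ^ (-(α t)) * deriv x τ)
      (𝓝[>] a) (𝓝 0) := by
    apply squeeze_zero_norm' (a := fun t => (M' / (1 - c)) * (t - a) ^ (1 - c))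
    · have hev1 : ∀ᶠ t in 𝓝[>] a, α t < c := hαt (Iio_mem_nhds hac)
      have hev0 : ∀ᶠ t in 𝓝[>] a, 0 < α t := hαt (Ioi_mem_nhds hαa0)
      have hev2 : ∀ᶠ t in 𝓝[>] a, t ∈ Set.Ioc a (min b (a + 1)) :=
        Ioc_mem_nhdsGT (lt_min hab (by linarith))
      filter_upwards [hev1, hev0, hev2] with t htc ht0 htb
      obtain ⟨hat, htmin⟩ := htb
      have htb' : t ≤ b := htmin.trans (min_le_left _ _)
      have hta1 : t - a ≤ 1 := by
        have := htmin.trans (min_le_right _ _); linarith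
      have hta0 : 0 < t - a := by linarith
      -- integrability of the bounding function
      have hii0 : IntervalIntegrable (fun u : ℝ => u ^ (-(α t))) MeasureTheory.volume
          0 (t - a) := intervalIntegrable_rpow' (by linarith)
      have hii : IntervalIntegrable (fun τ => M' * (t - τ) ^ (-(α t)))
          MeasureTheory.volume a t := by
        have := ((hii0.comp_sub_left t).const_mul M').symm
        simpa using this
      -- pointwise bound
      have hbound : ∀ τ ∈ Set.uIoc a t, ‖(t - τ) ^ (-(α t)) * deriv x τ‖ ≤
          M' * (t - τ) ^ (-(α t)) := by
        intro τ hτ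
        rw [Set.uIoc_of_le hat.le] at hτ
        rcases eq_or_lt_of_le hτ.2 with h | h
        · subst h
          rw [sub_self, Real.zero_rpow (neg_ne_zero.mpr (ne_of_gt ht0))]
          simp
        · have hτab : τ ∈ Set.Ioo a b := ⟨hτ.1, lt_of_lt_of_le h htb'⟩
          have hpos : (0:ℝ) ≤ (t - τ) ^ (-(α t)) := Real.rpow_nonneg (by linarith) _
          rw [norm_mul, mul_comm M']
          refine mul_le_mul ?_ ?_ (norm_nonneg _) hpos
          · rw [Real.norm_rpow_of_nonneg (by linarith)]
            rw [Real.norm_of_nonneg (by linarith)]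
          · exact hMderiv τ hτab
      have h1 := intervalIntegral.norm_integral_le_abs_of_norm_le
        (μ := MeasureTheory.volume) (f := fun τ => (t - τ) ^ (-(α t)) * deriv x τ)
        (MeasureTheory.ae_restrict_of_forall_mem measurableSet_uIoc hbound) hii
      -- compute the bounding integral
      have hval : (∫ τ in a..t, M' * (t - τ) ^ (-(α t))) =
          M' * ((t - a) ^ (1 - α t) / (1 - α t)) := by
        rw [intervalIntegral.integral_const_mul]
        congr 1
        rw [intervalIntegral.integral_comp_sub_left (fun u => u ^ (-(α t))) t]
        rw [sub_self]
        rw [integral_rpow (Or.inl (by linarith))]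
        rw [Real.zero_rpow (by linarith : -(α t) + 1 ≠ 0)]
        ring_nf
      refine h1.trans ?_
      have hnn : 0 ≤ M' * ((t - a) ^ (1 - α t) / (1 - α t)) :=
        mul_nonneg hM'0 (div_nonneg (Real.rpow_nonneg hta0.le _) (by linarith))
      rw [hval, abs_of_nonneg hnn]
      have hrp : (t - a) ^ (1 - α t) ≤ (t - a) ^ (1 - c) :=
        Real.rpow_le_rpow_of_exponent_ge hta0 hta1 (by linarith)
      calc M' * ((t - a) ^ (1 - α t) / (1 - α t))
          ≤ M' * ((t - a) ^ (1 - c) / (1 - c)) := by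
            refine mul_le_mul_of_nonneg_left ?_ hM'0
            exact div_le_div₀ (by positivity) hrp (by linarith) (by linarith)
        _ = M' / (1 - c) * (t - a) ^ (1 - c) := by ring
    · have : Tendsto (fun t : ℝ => (t - a) ^ (1 - c)) (𝓝[>] a) (𝓝 0) := by
        have h0 : Tendsto (fun t : ℝ => t - a) (𝓝[>] a) (𝓝 0) := by
          have h0' : Tendsto (fun t : ℝ => t - a) (𝓝 a) (𝓝 (a - a)) :=
            (continuous_id.sub (continuous_const (y := a))).tendsto a
          simpa using h0'.mono_left nhdsWithin_le_nhds
        have h2 : ContinuousAt (fun u : ℝ => u ^ (1 - c)) 0 :=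
          Real.continuousAt_rpow_const 0 (1 - c) (Or.inr (by linarith))
        have := h2.tendsto.comp h0
        simpa [Function.comp_def, Real.zero_rpow (by linarith : (1:ℝ) - c ≠ 0)] using this
      simpa using this.const_mul (M' / (1 - c))
  simpa using hcoef.mul hint
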